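/- For every α > 0, there exists δ ∈ (0, 1/4) and p̄ > 0 such that for all p0 ∈ (0, p̄), all η ∈ [0, 2α], and all x1 ∈ (0, 2δ]: (2α)² · ∫₁^∞ σ^(1−p0) / (σ²·(σ² + η²)) dσ < ∫₁^(1/(2δ)) σ^(1−p0) · α²(σ−1)² / ((σ² + α²)·(σ² + α²σ²)) dσ. -/

import Mathlib

open Set MeasureTheory

/-- Key sufficient condition preventing barrier crossing: for every `α > 0`
there are `δ ∈ (0,1/4)` and `p̄ > 0` such that for all `p0 ∈ (0,p̄)`,
`η ∈ [0,2α]`, `x1 ∈ (0,2δ]`, the stated integral inequality holds. -/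
lemma aux_stmt5 (α : ℝ) (hα : 0 < α) :
    2 * α ^ 2 < α ^ 2 / (2 * (1 + α ^ 2) ^ 2) * ((3 + 4 * (1 + α ^ 2) ^ 2) - 2) := by
  rw [div_mul_eq_mul_div, lt_div_iff₀ (by positivity)]
  nlinarith [pow_pos hα 2, sq_nonneg (1 + α ^ 2)]

theorem stmt_5 (α : ℝ) (hα : 0 < α) :
    ∃ δ ∈ Set.Ioo (0 : ℝ) (1/4), ∃ pbar > (0 : ℝ),
      ∀ p0 ∈ Set.Ioo (0 : ℝ) pbar, ∀ η ∈ Set.Icc (0 : ℝ) (2 * α),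
        ∀ x1 ∈ Set.Ioc (0 : ℝ) (2 * δ),
          (2 * α) ^ 2 * ∫ σ in Set.Ioi (1 : ℝ),
              σ ^ (1 - p0) / (σ ^ 2 * (σ ^ 2 + η ^ 2)) <
            ∫ σ in (1 : ℝ)..(1 / (2 * δ)),
              σ ^ (1 - p0) * (α ^ 2 * (σ - 1) ^ 2) /
                ((σ ^ 2 + α ^ 2) * (σ ^ 2 + α ^ 2 * σ ^ 2)) := by
  set L : ℝ := 3 + 4 * (1 + α ^ 2) ^ 2 with hLdef
  have hL7 : (7:ℝ) ≤ L := by nlinarith [sq_nonneg α]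
  have hLpos : (0:ℝ) < L := by linarith
  have hexpL : (8:ℝ) ≤ Real.exp L := by
    have := Real.add_one_le_exp L; linarith
  refine ⟨Real.exp (-L) / 2, ⟨by positivity, ?_⟩, Real.log 2 / L, by positivity, ?_⟩
  · have h1 : Real.exp (-L) ≤ 1/8 := by
      rw [Real.exp_neg]
      rw [inv_le_comm₀ (by positivity) (by norm_num)]
      simpa using hexpL
    linarith
  intro p0 hp0 η hη x1 hx1
  have hMeq : 1 / (2 * (Real.exp (-L) / 2)) = Real.exp L := by
    rw [Real.exp_neg]; field_simp
  rw [hMeq]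
  set M : ℝ := Real.exp L with hMdef
  have hM8 : (8:ℝ) ≤ M := hexpL
  have hM1 : (1:ℝ) < M := by linarith
  have hp0pos : 0 < p0 := hp0.1
  -- LHS bound
  have hIg : IntegrableOn (fun σ : ℝ => σ ^ (-3 : ℝ)) (Ioi 1) :=
    integrableOn_Ioi_rpow_of_lt (by norm_num) one_pos
  have hgval : (∫ σ in Ioi (1:ℝ), σ ^ (-3 : ℝ)) = 1/2 := by
    rw [integral_Ioi_rpow_of_lt (by norm_num) one_pos]
    norm_num
  have hbound : ∀ σ ∈ Ioi (1:ℝ),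
      σ ^ (1 - p0) / (σ ^ 2 * (σ ^ 2 + η ^ 2)) ≤ σ ^ (-3 : ℝ) := by
    intro σ hσ
    have hσ1 : (1:ℝ) < σ := hσ
    have hσ0 : (0:ℝ) < σ := by linarith
    have hnum : σ ^ (1 - p0) ≤ σ := by
      calc σ ^ (1 - p0) ≤ σ ^ (1:ℝ) :=
            Real.rpow_le_rpow_of_exponent_le hσ1.le (by linarith)
        _ = σ := Real.rpow_one σ
    have hden : σ ^ 4 ≤ σ ^ 2 * (σ ^ 2 + η ^ 2) := by nlinarith [sq_nonneg η, sq_nonneg σ]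
    have h4 : (0:ℝ) < σ ^ 4 := by positivity
    calc σ ^ (1 - p0) / (σ ^ 2 * (σ ^ 2 + η ^ 2)) ≤ σ / σ ^ 4 :=
          div_le_div₀ (le_of_lt hσ0) hnum h4 hden
      _ = σ ^ (-3 : ℝ) := by
          rw [Real.rpow_neg hσ0.le, show (3:ℝ) = ((3:ℕ):ℝ) by norm_num,
            Real.rpow_natCast]
          field_simp
  have hfnn : ∀ σ ∈ Ioi (1:ℝ), 0 ≤ σ ^ (1 - p0) / (σ ^ 2 * (σ ^ 2 + η ^ 2)) := by
    intro σ hσ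
    have hσ0 : (0:ℝ) < σ := lt_trans one_pos hσ
    positivity
  have hmeas : AEStronglyMeasurable
      (fun σ : ℝ => σ ^ (1 - p0) / (σ ^ 2 * (σ ^ 2 + η ^ 2)))
      (volume.restrict (Ioi 1)) := by
    apply ContinuousOn.aestronglyMeasurable ?_ measurableSet_Ioi
    apply ContinuousOn.div
    · refine continuousOn_id.rpow_const fun x hx => Or.inl ?_
      have hx1 : (1:ℝ) < x := hx
      exact ne_of_gt (by simp only [id_eq]; linarith)
    · fun_prop
    · intro x hx
      have hx1 : (1:ℝ) < x := hx
      positivity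
  have hIf : IntegrableOn (fun σ : ℝ => σ ^ (1 - p0) / (σ ^ 2 * (σ ^ 2 + η ^ 2))) (Ioi 1) := by
    apply Integrable.mono' hIg hmeas
    filter_upwards [ae_restrict_mem measurableSet_Ioi] with σ hσ
    rw [Real.norm_of_nonneg (hfnn σ hσ)]
    exact hbound σ hσ
  have hLHS : (∫ σ in Ioi (1:ℝ), σ ^ (1 - p0) / (σ ^ 2 * (σ ^ 2 + η ^ 2))) ≤ 1/2 := by
    rw [← hgval]
    exact setIntegral_mono_on hIf hIg measurableSet_Ioi hbound
  -- RHS bound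
  set c : ℝ := α ^ 2 / (2 * (1 + α ^ 2) ^ 2) with hcdef
  have hcpos : 0 < c := by positivity
  have hglow : ∀ σ ∈ Icc (1:ℝ) M,
      c * (1/σ - 2/σ^2) ≤ σ ^ (1 - p0) * (α ^ 2 * (σ - 1) ^ 2) /
        ((σ ^ 2 + α ^ 2) * (σ ^ 2 + α ^ 2 * σ ^ 2)) := by
    intro σ hσ
    obtain ⟨hσ1, hσM⟩ := hσ
    have hσ0 : (0:ℝ) < σ := by linarith
    have hp0L : p0 * L < Real.log 2 := by
      have h2 := hp0.2
      calc p0 * L < (Real.log 2 / L) * L := mul_lt_mul_of_pos_right h2 hLpos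
        _ = Real.log 2 := by field_simp
    have hpow : σ ^ p0 ≤ 2 := by
      calc σ ^ p0 ≤ M ^ p0 := Real.rpow_le_rpow hσ0.le hσM hp0pos.le
        _ = Real.exp (L * p0) := by rw [hMdef, ← Real.exp_mul]
        _ ≤ Real.exp (Real.log 2) := Real.exp_le_exp.mpr (by nlinarith)
        _ = 2 := Real.exp_log (by norm_num)
    have hnum : σ / 2 ≤ σ ^ (1 - p0) := by
      have h1 : σ ^ (1 - p0) = σ / σ ^ p0 := by
        rw [sub_eq_add_neg, Real.rpow_add hσ0, Real.rpow_one, Real.rpow_neg hσ0.le]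
        ring
      rw [h1]
      exact div_le_div_of_nonneg_left hσ0.le (by positivity) hpow
    have hσsq : (1:ℝ) ≤ σ ^ 2 := by nlinarith
    have hden : (σ ^ 2 + α ^ 2) * (σ ^ 2 + α ^ 2 * σ ^ 2) ≤ σ ^ 4 * (1 + α ^ 2) ^ 2 := by
      have h2 : σ ^ 2 + α ^ 2 ≤ σ ^ 2 * (1 + α ^ 2) := by
        nlinarith [mul_le_mul_of_nonneg_left hσsq (sq_nonneg α)]
      calc (σ ^ 2 + α ^ 2) * (σ ^ 2 + α ^ 2 * σ ^ 2)
          = (σ ^ 2 + α ^ 2) * (σ ^ 2 * (1 + α ^ 2)) := by ring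
        _ ≤ (σ ^ 2 * (1 + α ^ 2)) * (σ ^ 2 * (1 + α ^ 2)) :=
            mul_le_mul_of_nonneg_right h2 (by positivity)
        _ = σ ^ 4 * (1 + α ^ 2) ^ 2 := by ring
    have hdenpos : (0:ℝ) < (σ ^ 2 + α ^ 2) * (σ ^ 2 + α ^ 2 * σ ^ 2) := by positivity
    have step1 : (σ / 2) * (α ^ 2 * (σ - 1) ^ 2) / (σ ^ 4 * (1 + α ^ 2) ^ 2)
        ≤ σ ^ (1 - p0) * (α ^ 2 * (σ - 1) ^ 2) /
          ((σ ^ 2 + α ^ 2) * (σ ^ 2 + α ^ 2 * σ ^ 2)) := by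
      apply div_le_div₀ (by positivity) ?_ hdenpos hden
      exact mul_le_mul_of_nonneg_right hnum (by positivity)
    refine le_trans ?_ step1
    have hkey : 1/σ - 2/σ^2 ≤ (σ-1)^2/σ^3 := by
      have h : (σ-1)^2/σ^3 - (1/σ - 2/σ^2) = 1/σ^3 := by
        field_simp; ring
      have hpos : (0:ℝ) < 1/σ^3 := by positivity
      linarith
    have hc1 : c * (1/σ - 2/σ^2) ≤ c * ((σ-1)^2/σ^3) :=
      mul_le_mul_of_nonneg_left hkey hcpos.le
    have heq : c * ((σ-1)^2/σ^3)
        = (σ / 2) * (α ^ 2 * (σ - 1) ^ 2) / (σ ^ 4 * (1 + α ^ 2) ^ 2) := by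
      rw [hcdef]; field_simp
    linarith [hc1, heq ▸ hc1]
  -- integrability on [1,M]
  have huIcc : uIcc (1:ℝ) M = Icc 1 M := uIcc_of_le hM1.le
  have hIf2 : IntervalIntegrable
      (fun σ : ℝ => σ ^ (1 - p0) * (α ^ 2 * (σ - 1) ^ 2) /
        ((σ ^ 2 + α ^ 2) * (σ ^ 2 + α ^ 2 * σ ^ 2))) volume 1 M := by
    apply ContinuousOn.intervalIntegrable
    rw [huIcc]
    apply ContinuousOn.div
    · apply ContinuousOn.mul ?_ (by fun_prop)
      refine continuousOn_id.rpow_const fun x hx => Or.inl ?_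
      have hx1 : (1:ℝ) ≤ x := hx.1
      exact ne_of_gt (by simp only [id_eq]; linarith)
    · fun_prop
    · intro x hx
      have hx1 : (1:ℝ) ≤ x := hx.1
      have hx0 : (0:ℝ) < x := by linarith
      positivity
  have hIglow : IntervalIntegrable (fun σ : ℝ => c * (1/σ - 2/σ^2)) volume 1 M := by
    apply ContinuousOn.intervalIntegrable
    rw [huIcc]
    have : ∀ x ∈ Icc (1:ℝ) M, x ≠ 0 := fun x hx => ne_of_gt (by linarith [hx.1])
    apply ContinuousOn.mul continuousOn_const
    apply ContinuousOn.sub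
    · exact ContinuousOn.div continuousOn_const continuousOn_id fun x hx => by
        simpa using this x hx
    · exact ContinuousOn.div continuousOn_const (by fun_prop) fun x hx =>
        pow_ne_zero 2 (this x hx)
  -- compute ∫ g via FTC
  have hFTC : (∫ σ in (1:ℝ)..M, c * (1/σ - 2/σ^2))
      = c * (Real.log M + 2/M) - c * (Real.log 1 + 2/1) := by
    apply intervalIntegral.integral_eq_sub_of_hasDerivAt
        (f := fun σ => c * (Real.log σ + 2/σ)) ?_ hIglow
    intro x hx
    rw [huIcc] at hx
    have hx0 : (0:ℝ) < x := by linarith [hx.1]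
    have h1 : HasDerivAt (fun σ : ℝ => Real.log σ + 2/σ) (x⁻¹ + 2 * -(x^2)⁻¹) x := by
      apply HasDerivAt.add (Real.hasDerivAt_log hx0.ne')
      show HasDerivAt (fun σ : ℝ => 2 / σ) (2 * -(x^2)⁻¹) x
      simpa [div_eq_mul_inv] using (hasDerivAt_inv hx0.ne').const_mul (2:ℝ)
    have h2 := h1.const_mul c
    exact h2.congr_deriv (by ring)
  have hlogM : Real.log M = L := Real.log_exp L
  have hglowval : (∫ σ in (1:ℝ)..M, c * (1/σ - 2/σ^2)) = c * (L + 2/M - 2) := by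
    rw [hFTC, hlogM]; simp [Real.log_one]; ring
  have hmono : (∫ σ in (1:ℝ)..M, c * (1/σ - 2/σ^2))
      ≤ ∫ σ in (1:ℝ)..M, σ ^ (1 - p0) * (α ^ 2 * (σ - 1) ^ 2) /
          ((σ ^ 2 + α ^ 2) * (σ ^ 2 + α ^ 2 * σ ^ 2)) :=
    intervalIntegral.integral_mono_on hM1.le hIglow hIf2 hglow
  -- final chain
  have hfin1 : (2 * α) ^ 2 * (∫ σ in Ioi (1:ℝ), σ ^ (1 - p0) / (σ ^ 2 * (σ ^ 2 + η ^ 2)))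
      ≤ 2 * α ^ 2 := by
    calc (2 * α) ^ 2 * (∫ σ in Ioi (1:ℝ), σ ^ (1 - p0) / (σ ^ 2 * (σ ^ 2 + η ^ 2)))
        ≤ (2 * α) ^ 2 * (1/2) :=
          mul_le_mul_of_nonneg_left hLHS (by positivity)
      _ = 2 * α ^ 2 := by ring
  have hfin2 : 2 * α ^ 2 < c * (L - 2) := by
    rw [hcdef, hLdef]
    exact aux_stmt5 α hα
  have hfin3 : c * (L - 2) ≤ c * (L + 2/M - 2) := by
    have h2M : (0:ℝ) ≤ 2/M := by positivity
    exact mul_le_mul_of_nonneg_left (by linarith) hcpos.le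
  calc (2 * α) ^ 2 * (∫ σ in Ioi (1:ℝ), σ ^ (1 - p0) / (σ ^ 2 * (σ ^ 2 + η ^ 2)))
      ≤ 2 * α ^ 2 := hfin1
    _ < c * (L - 2) := hfin2
    _ ≤ c * (L + 2/M - 2) := hfin3
    _ = ∫ σ in (1:ℝ)..M, c * (1/σ - 2/σ^2) := hglowval.symm
    _ ≤ _ := hmono
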